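/- Let d ≥ 1 and M ≥ 1. Let W be an invertible d×d real matrix, let Λ₁ = I_d and, for m = 2, ..., M, let Λ_m be diagonal d×d matrices with strictly positive diagonal entries; set Ω_m = W Λ_m Wᵀ. Let w₁, ..., w_M be strictly positive reals, set D = Σ_{m=1}^M w_m Λ_m (a diagonal matrix with strictly positive diagonal), and set B = W D^{1/2} where D^{1/2} is the diagonal matrix of entrywise square roots. Then: (a) B Bᵀ = Σ_{m=1}^M w_m Ω_m; (b) for every m, B⁻¹ Ω_m (B⁻¹)ᵀ = Λ_m D⁻¹, which is diagonal; and (c) Σ_{m=1}^M w_m B⁻¹ Ω_m (B⁻¹)ᵀ = I_d. -/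

import Mathlib

open Matrix

/-- Properties of the impact matrix B = W D^{1/2} with D = Σ_m w_m Λ_m, Λ₁ = I (regime 1 is
indexed by `⟨0, hM⟩`), Λ_m diagonal with strictly positive diagonals, w_m > 0, and
Ω_m = W Λ_m Wᵀ:
(a) B Bᵀ = Σ_m w_m Ω_m;
(b) B⁻¹ Ω_m (B⁻¹)ᵀ = Λ_m D⁻¹, which is diagonal;
(c) Σ_m w_m B⁻¹ Ω_m (B⁻¹)ᵀ = I. -/
theorem impact_matrix_simultaneous_diagonalization (d M : ℕ) (hd : 1 ≤ d) (hM : 1 ≤ M)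
    (W : Matrix (Fin d) (Fin d) ℝ) (hW : IsUnit W.det)
    (lam : Fin M → Fin d → ℝ) (hlam1 : lam ⟨0, hM⟩ = fun _ => (1 : ℝ))
    (hpos : ∀ m i, 0 < lam m i)
    (w : Fin M → ℝ) (hw : ∀ m, 0 < w m) :
    let Ω : Fin M → Matrix (Fin d) (Fin d) ℝ := fun m => W * Matrix.diagonal (lam m) * Wᵀ
    let Dfun : Fin d → ℝ := fun i => ∑ m, w m * lam m i
    let B : Matrix (Fin d) (Fin d) ℝ :=
      W * Matrix.diagonal (fun i => Real.sqrt (Dfun i))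
    (B * Bᵀ = ∑ m, w m • Ω m) ∧
    (∀ m, B⁻¹ * Ω m * (B⁻¹)ᵀ = Matrix.diagonal (lam m) * (Matrix.diagonal Dfun)⁻¹ ∧
      (B⁻¹ * Ω m * (B⁻¹)ᵀ).IsDiag) ∧
    (∑ m, w m • (B⁻¹ * Ω m * (B⁻¹)ᵀ) = 1) := by
  intro Ω Dfun B
  have hMne : (Finset.univ : Finset (Fin M)).Nonempty := ⟨⟨0, hM⟩, Finset.mem_univ _⟩
  have hD : ∀ i, 0 < Dfun i := fun i =>
    Finset.sum_pos (fun m _ => mul_pos (hw m) (hpos m i)) hMne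
  have hDne : ∀ i, Dfun i ≠ 0 := fun i => (hD i).ne'
  have hsq : ∀ i, Real.sqrt (Dfun i) * Real.sqrt (Dfun i) = Dfun i := fun i =>
    Real.mul_self_sqrt (hD i).le
  have hsne : ∀ i, Real.sqrt (Dfun i) ≠ 0 := fun i =>
    (Real.sqrt_pos.mpr (hD i)).ne'
  have hSunit : IsUnit (Matrix.diagonal fun i => Real.sqrt (Dfun i)).det := by
    rw [Matrix.det_diagonal]
    exact isUnit_iff_ne_zero.mpr (Finset.prod_ne_zero_iff.mpr fun i _ => hsne i)
  have hWT : IsUnit Wᵀ.det := by simpa using hW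
  have hdsum : ∀ f : Fin M → Fin d → ℝ,
      (∑ m, Matrix.diagonal (f m)) = Matrix.diagonal (fun i => ∑ m, f m i) := by
    intro f
    ext i j
    by_cases h : i = j <;>
      simp [Matrix.sum_apply, Matrix.diagonal_apply, h]
  have hdsmul : ∀ (c : ℝ) (f : Fin d → ℝ),
      c • Matrix.diagonal f = Matrix.diagonal (fun i => c * f i) := by
    intro c f
    ext i j
    by_cases h : i = j <;>
      simp [Matrix.diagonal_apply, h]
  have hDdiag : Matrix.diagonal Dfun = ∑ m, w m • Matrix.diagonal (lam m) := by
    simp only [hdsmul, hdsum]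
    rfl
  -- part a
  have ha : B * Bᵀ = ∑ m, w m • Ω m := by
    have h1 : B * Bᵀ = W * Matrix.diagonal Dfun * Wᵀ := by
      show W * Matrix.diagonal (fun i => Real.sqrt (Dfun i)) *
          (W * Matrix.diagonal fun i => Real.sqrt (Dfun i))ᵀ = _
      rw [Matrix.transpose_mul, Matrix.diagonal_transpose, Matrix.mul_assoc,
        ← Matrix.mul_assoc (Matrix.diagonal _), Matrix.diagonal_mul_diagonal]
      simp only [hsq]
      rw [← Matrix.mul_assoc]
    rw [h1, hDdiag, Matrix.mul_sum, Matrix.sum_mul]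
    refine Finset.sum_congr rfl fun m _ => ?_
    simp only [Ω, Matrix.mul_smul, Matrix.smul_mul, Matrix.mul_assoc]
  -- B⁻¹
  have hBinv : B⁻¹ = (Matrix.diagonal fun i => (Real.sqrt (Dfun i))⁻¹) * W⁻¹ := by
    rw [Matrix.mul_inv_rev]
    congr 1
    exact Matrix.inv_eq_right_inv (by
      rw [Matrix.diagonal_mul_diagonal, ← Matrix.diagonal_one]
      exact congrArg Matrix.diagonal (funext fun i => mul_inv_cancel₀ (hsne i)))
  have hb : ∀ m, B⁻¹ * Ω m * (B⁻¹)ᵀ =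
      Matrix.diagonal (fun i => lam m i * (Dfun i)⁻¹) := by
    intro m
    rw [hBinv]
    simp only [Ω, Matrix.transpose_mul, Matrix.diagonal_transpose,
      Matrix.transpose_nonsing_inv, Matrix.mul_assoc]
    rw [← Matrix.mul_assoc W⁻¹ W, Matrix.nonsing_inv_mul W hW, Matrix.one_mul,
      ← Matrix.mul_assoc Wᵀ, Matrix.mul_nonsing_inv Wᵀ hWT, Matrix.one_mul,
      Matrix.diagonal_mul_diagonal, Matrix.diagonal_mul_diagonal]
    refine congrArg Matrix.diagonal (funext fun i => ?_)
    rw [mul_left_comm, ← mul_inv, hsq i]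
  refine ⟨ha, fun m => ⟨?_, ?_⟩, ?_⟩
  · have hinv : (Matrix.diagonal Dfun)⁻¹ = Matrix.diagonal (fun i => (Dfun i)⁻¹) :=
      Matrix.inv_eq_right_inv (by
        rw [Matrix.diagonal_mul_diagonal, ← Matrix.diagonal_one]
        exact congrArg Matrix.diagonal (funext fun i => mul_inv_cancel₀ (hDne i)))
    rw [hb m, hinv, Matrix.diagonal_mul_diagonal]
  · rw [hb m]; exact Matrix.isDiag_diagonal _
  · have h2 : ∀ m : Fin M, w m • (B⁻¹ * Ω m * (B⁻¹)ᵀ)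
        = Matrix.diagonal (fun i => w m * (lam m i * (Dfun i)⁻¹)) := by
      intro m; rw [hb m, hdsmul]
    simp only [h2, hdsum]
    rw [← Matrix.diagonal_one]
    refine congrArg Matrix.diagonal (funext fun i => ?_)
    have h3 : ∑ m, w m * (lam m i * (Dfun i)⁻¹)
        = (∑ m, w m * lam m i) * (Dfun i)⁻¹ := by
      rw [Finset.sum_mul]; exact Finset.sum_congr rfl fun m _ => by ring
    rw [h3]
    exact mul_inv_cancel₀ (hDne i)
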